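/- Let B, K₁, K₂, S be real symmetric p×p matrices with B, S − B positive semidefinite and K₁, K₂ positive definite, let γ ∈ (0,1), K_Δ = B + γK₁ + (1−γ)K₂, and P = (B+K₁)K_Δ⁻¹(B+K₂). If a symmetric positive definite matrix J satisfies both J⁻¹ ⪯ Pᵀ + (S−B) and J ⪯ (Pᵀ − B)⁻¹ (with Pᵀ − B positive definite), and M₁, M₂ are symmetric positive semidefinite with B·M₁ = 0 and (S−B)·M₂ = 0, then tr( (M₂ − M₁)·( P·J·Pᵀ − P ) ) ≥ 0, provided Pᵀ = (B+K₂)K_Δ⁻¹(B+K₁). -/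

import Mathlib

open Matrix

lemma myCT {p : ℕ} (A : Matrix (Fin p) (Fin p) ℝ) : Aᴴ = Aᵀ := by
  ext i j; simp [conjTranspose_apply]

lemma myTraceNonneg {p : ℕ} {A : Matrix (Fin p) (Fin p) ℝ} (hA : A.PosSemidef) :
    0 ≤ A.trace := by
  rw [Matrix.trace]
  refine Finset.sum_nonneg fun i _ => ?_
  exact hA.diag_nonneg

lemma myTraceMulNonneg {p : ℕ} {A B : Matrix (Fin p) (Fin p) ℝ}
    (hA : A.PosSemidef) (hB : B.PosSemidef) : 0 ≤ (A * B).trace := by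
  obtain ⟨C, hC⟩ : ∃ C : Matrix (Fin p) (Fin p) ℝ, B = Cᴴ * C := by
    open scoped MatrixOrder in exact CStarAlgebra.nonneg_iff_eq_star_mul_self.mp hB.nonneg
  have h1 : (C * A * Cᴴ).PosSemidef := hA.mul_mul_conjTranspose_same C
  have h2 : (A * B).trace = (C * A * Cᴴ).trace := by
    rw [hC, ← Matrix.mul_assoc, Matrix.trace_mul_comm, ← Matrix.mul_assoc]
  rw [h2]
  exact myTraceNonneg h1

lemma myInvAntitone {p : ℕ} {A B : Matrix (Fin p) (Fin p) ℝ}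
    (hA : A.PosDef) (hB : B.PosDef) (h : (B - A).PosSemidef) :
    (A⁻¹ - B⁻¹).PosSemidef := by
  letI := hA.isUnit.invertible
  letI := hB.isUnit.invertible
  set D := B - A with hD
  have key : A⁻¹ - B⁻¹ = (B⁻¹)ᴴ * D * B⁻¹ + (D * B⁻¹)ᴴ * A⁻¹ * (D * B⁻¹) := by
    rw [Matrix.conjTranspose_mul, (hB.inv.isHermitian).eq, h.isHermitian.eq, hD]
    simp only [Matrix.mul_sub, Matrix.sub_mul, Matrix.mul_assoc,
      Matrix.mul_inv_of_invertible, Matrix.inv_mul_of_invertible,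
      Matrix.mul_one, Matrix.one_mul,
      Matrix.mul_inv_cancel_left_of_invertible, Matrix.inv_mul_cancel_left_of_invertible]
    abel
  rw [key]
  exact ((h.conjTranspose_mul_mul_same B⁻¹).add (hA.inv.posSemidef.conjTranspose_mul_mul_same (D * B⁻¹)))

theorem stmt18 (p : ℕ) (B K₁ K₂ S M₁ M₂ J : Matrix (Fin p) (Fin p) ℝ)
    (hB : B.PosSemidef) (hSB : (S - B).PosSemidef)
    (hK₁ : K₁.PosDef) (hK₂ : K₂.PosDef)
    (γ : ℝ) (hγ0 : 0 < γ) (hγ1 : γ < 1)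
    (KΔ : Matrix (Fin p) (Fin p) ℝ) (hKΔ : KΔ = B + γ • K₁ + (1 - γ) • K₂)
    (P : Matrix (Fin p) (Fin p) ℝ) (hP : P = (B + K₁) * KΔ⁻¹ * (B + K₂))
    (hPt : Pᵀ = (B + K₂) * KΔ⁻¹ * (B + K₁))
    (hJ : J.PosDef)
    (hCR : (Pᵀ + (S - B) - J⁻¹).PosSemidef)
    (hPtB : (Pᵀ - B).PosDef)
    (hDP : ((Pᵀ - B)⁻¹ - J).PosSemidef)
    (hM₁ : M₁.PosSemidef) (hM₂ : M₂.PosSemidef)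
    (hBM₁ : B * M₁ = 0) (hSBM₂ : (S - B) * M₂ = 0) :
    0 ≤ ((M₂ - M₁) * (P * J * Pᵀ - P)).trace := by
  set Q : Matrix (Fin p) (Fin p) ℝ := Pᵀ + (S - B) with hQ
  set R : Matrix (Fin p) (Fin p) ℝ := Pᵀ - B with hR
  have hQpd : Q.PosDef := by
    have : Q = (Q - J⁻¹) + J⁻¹ := by abel
    rw [this]
    exact Matrix.PosDef.posSemidef_add hCR hJ.inv
  letI := hQpd.isUnit.invertible
  letI := hPtB.isUnit.invertible
  -- J - Q⁻¹ is PSD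
  have hJQ : (J - Q⁻¹).PosSemidef := by
    have h1 : ((J⁻¹)⁻¹ - Q⁻¹).PosSemidef := myInvAntitone hJ.inv hQpd hCR
    rwa [Matrix.nonsing_inv_nonsing_inv J ((Matrix.isUnit_iff_isUnit_det J).mp hJ.isUnit)] at h1
  -- decompositions
  have decQ : P * J * Pᵀ - P = P * (J - Q⁻¹) * Pᵀ - P * Q⁻¹ * (S - B) := by
    have : P * Q⁻¹ * Q = P := by
      rw [Matrix.mul_assoc, Matrix.nonsing_inv_mul _ (Matrix.isUnit_iff_isUnit_det _ |>.mp hQpd.isUnit), Matrix.mul_one]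
    calc P * J * Pᵀ - P = P * (J - Q⁻¹) * Pᵀ + (P * Q⁻¹ * Q - P) - P * Q⁻¹ * (S - B) := by
          rw [hQ]; simp only [Matrix.mul_sub, Matrix.sub_mul, Matrix.mul_add]; abel
      _ = P * (J - Q⁻¹) * Pᵀ - P * Q⁻¹ * (S - B) := by rw [this]; abel
  have decR : P * J * Pᵀ - P = P * (J - R⁻¹) * Pᵀ + P * R⁻¹ * B := by
    have : P * R⁻¹ * R = P := by
      rw [Matrix.mul_assoc, Matrix.nonsing_inv_mul _ (Matrix.isUnit_iff_isUnit_det _ |>.mp hPtB.isUnit), Matrix.mul_one]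
    calc P * J * Pᵀ - P = P * (J - R⁻¹) * Pᵀ + (P * R⁻¹ * R - P) + P * R⁻¹ * B := by
          rw [hR]; simp only [Matrix.mul_sub, Matrix.sub_mul]; abel
      _ = P * (J - R⁻¹) * Pᵀ + P * R⁻¹ * B := by rw [this]; abel
  -- M₂ part
  have h2 : 0 ≤ (M₂ * (P * J * Pᵀ - P)).trace := by
    rw [decQ, Matrix.mul_sub, Matrix.trace_sub]
    have z : (M₂ * (P * Q⁻¹ * (S - B))).trace = 0 := by
      rw [Matrix.trace_mul_comm]
      have : P * Q⁻¹ * (S - B) * M₂ = P * Q⁻¹ * ((S - B) * M₂) := by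
        simp only [Matrix.mul_assoc]
      rw [this, hSBM₂, Matrix.mul_zero, Matrix.trace_zero]
    rw [z, sub_zero]
    have hpsd : (P * (J - Q⁻¹) * Pᵀ).PosSemidef := by
      have := hJQ.mul_mul_conjTranspose_same P
      rwa [myCT] at this
    exact myTraceMulNonneg hM₂ hpsd
  -- M₁ part
  have h1 : (M₁ * (P * J * Pᵀ - P)).trace ≤ 0 := by
    rw [decR, Matrix.mul_add, Matrix.trace_add]
    have z : (M₁ * (P * R⁻¹ * B)).trace = 0 := by
      rw [Matrix.trace_mul_comm]
      have : P * R⁻¹ * B * M₁ = P * R⁻¹ * (B * M₁) := by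
        simp only [Matrix.mul_assoc]
      rw [this, hBM₁, Matrix.mul_zero, Matrix.trace_zero]
    rw [z, add_zero]
    have hpsd : (P * (R⁻¹ - J) * Pᵀ).PosSemidef := by
      have := hDP.mul_mul_conjTranspose_same P
      rwa [myCT] at this
    have : 0 ≤ (M₁ * (P * (R⁻¹ - J) * Pᵀ)).trace := myTraceMulNonneg hM₁ hpsd
    have e : M₁ * (P * (J - R⁻¹) * Pᵀ) = -(M₁ * (P * (R⁻¹ - J) * Pᵀ)) := by
      simp only [Matrix.mul_sub, Matrix.sub_mul, Matrix.mul_neg, Matrix.neg_mul]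
      abel
    rw [e, Matrix.trace_neg]
    linarith
  have : (M₂ - M₁) * (P * J * Pᵀ - P) = M₂ * (P * J * Pᵀ - P) - M₁ * (P * J * Pᵀ - P) :=
    Matrix.sub_mul _ _ _
  rw [this, Matrix.trace_sub]
  linarith
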